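/- Let M be a Hilbert module over an algebra A such that every module multiplication operator M_φ is essentially normal, and let 0 ← M₀ ← M₁ ← M₂ ← 0 be a short exact sequence of Hilbert modules where M₁ = M, the map M₂ → M₁ is an isometric module map onto a submodule N, and M₀ ≅ M₁/N. Then M₂ is essentially reductive if and only if M₀ is essentially reductive. -/

import Mathlib

open ContinuousLinearMap

lemma compact_of_adjoint_comp' {E F : Type*} [NormedAddCommGroup E] [InnerProductSpace ℂ E]
    [CompleteSpace E] [NormedAddCommGroup F] [InnerProductSpace ℂ F] [CompleteSpace F]
    (S : E →L[ℂ] F) (h : IsCompactOperator ⇑(adjoint S ∘L S)) : IsCompactOperator ⇑S := by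
  set T := adjoint S ∘L S with hT
  have h' : IsCompactOperator ⇑(T.toLinearMap) := h
  have htb : TotallyBounded (⇑T '' Metric.closedBall 0 1) :=
    (h'.isCompact_closure_image_closedBall 1).totallyBounded.subset subset_closure
  have main : TotallyBounded (⇑S '' Metric.closedBall 0 1) := by
    rw [Metric.totallyBounded_iff]
    intro ε hε
    obtain ⟨t, hts, htfin, hcov⟩ := totallyBounded_iff_subset.mp htb
      _ (Metric.dist_mem_uniformity (ε := ε ^ 2 / 4) (by positivity))
    choose! xc hxc hTxc using fun c (hc : c ∈ t) => (hts hc : c ∈ ⇑T '' Metric.closedBall 0 1)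
    refine ⟨(fun c => S (xc c)) '' t, htfin.image _, ?_⟩
    rintro - ⟨x, hx, rfl⟩
    have := hcov (Set.mem_image_of_mem ⇑T hx)
    simp only [Set.mem_iUnion] at this
    obtain ⟨c, hc, hball⟩ := this
    simp only [Set.mem_iUnion, Metric.mem_ball]
    refine ⟨S (xc c), Set.mem_image_of_mem _ hc, ?_⟩
    have hdist : dist (T x) (T (xc c)) < ε ^ 2 / 4 := by
      rw [hTxc c hc]; exact hball
    have key : ‖S x - S (xc c)‖ ^ 2 ≤ ‖T x - T (xc c)‖ * ‖x - xc c‖ := by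
      have e1 : (‖S x - S (xc c)‖ : ℝ) ^ 2 = RCLike.re (inner ℂ (T (x - xc c)) (x - xc c)) := by
        rw [← inner_self_eq_norm_sq (𝕜 := ℂ), ← map_sub]
        congr 1
        rw [hT, comp_apply, adjoint_inner_left]
      rw [e1, map_sub]
      exact re_inner_le_norm _ _
    have hxn : ‖x - xc c‖ ≤ 2 := by
      have h1 : ‖x‖ ≤ 1 := by simpa using Metric.mem_closedBall.mp hx
      have h2 : ‖xc c‖ ≤ 1 := by simpa using Metric.mem_closedBall.mp (hxc c hc)
      calc ‖x - xc c‖ ≤ ‖x‖ + ‖xc c‖ := norm_sub_le _ _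
      _ ≤ 2 := by linarith
    rw [dist_eq_norm]
    have hTd : ‖T x - T (xc c)‖ < ε ^ 2 / 4 := by rwa [← dist_eq_norm]
    nlinarith [norm_nonneg (S x - S (xc c)), norm_nonneg (T x - T (xc c)),
      norm_nonneg (x - xc c), sq_nonneg ε]
  have : IsCompactOperator ⇑(S.toLinearMap) := by
    rw [isCompactOperator_iff_isCompact_closure_image_closedBall S.toLinearMap one_pos]
    exact TotallyBounded.isCompact_of_isClosed main.closure isClosed_closure
  exact this

lemma keycalc {R : Type*} [Ring R] [StarRing R] (p T : R) (hp : p * p = p) (hps : star p = p)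
    (hqTp : (1 - p) * (T * p) = 0) :
    (p * ((star T * T) - (T * star T)) * p
        = (star (p*(T*p)) * (p*(T*p)) - (p*(T*p)) * star (p*(T*p)))
          - (p*(T*(1-p))) * star (p*(T*(1-p)))) ∧
    ((1-p) * ((star T * T) - (T * star T)) * (1-p)
        = star (p*(T*(1-p))) * (p*(T*(1-p)))
          + (star ((1-p)*(T*(1-p))) * ((1-p)*(T*(1-p)))
             - ((1-p)*(T*(1-p))) * star ((1-p)*(T*(1-p))))) := by
  obtain ⟨q, hqdef⟩ : ∃ q' : R, q' = 1 - p := ⟨_, rfl⟩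
  rw [← hqdef]
  have hTp : T * p = p * (T * p) := by
    rw [sub_mul, one_mul, sub_eq_zero] at hqTp; exact hqTp
  have hqs : star q = q := by rw [hqdef, star_sub, star_one, hps]
  have hpq : p * q = 0 := by rw [hqdef, mul_sub, mul_one, hp, sub_self]
  have hqp : q * p = 0 := by rw [hqdef, sub_mul, one_mul, hp, sub_self]
  have hq2 : q * q = q := by nth_rewrite 2 [hqdef]; rw [mul_sub, mul_one, hqp, sub_zero]
  have hpq1 : p + q = 1 := by rw [hqdef]; abel
  obtain ⟨u, hu⟩ : ∃ u' : R, u' = p * (T * p) := ⟨_, rfl⟩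
  obtain ⟨v, hv⟩ : ∃ v' : R, v' = p * (T * q) := ⟨_, rfl⟩
  obtain ⟨w, hw⟩ : ∃ w' : R, w' = q * (T * q) := ⟨_, rfl⟩
  rw [← hu, ← hv, ← hw]
  have h0 : q * (T * p) = 0 := by rw [hqdef]; exact hqTp
  have hT : T = u + v + w := by
    rw [hu, hv, hw]
    have h1 : p * (T * p) + p * (T * q) + q * (T * q) = (p + q) * (T * (p + q)) := by
      rw [show (p + q) * (T * (p + q))
          = p * (T * p) + p * (T * q) + (q * (T * p) + q * (T * q)) from by noncomm_ring,
        h0, zero_add, add_assoc]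
    rw [h1, hpq1, one_mul, mul_one]
  -- letter relations
  have pu : p * u = u := by rw [hu, ← mul_assoc, hp]
  have up : u * p = u := by rw [hu, mul_assoc, mul_assoc, hp]
  have pv : p * v = v := by rw [hv, ← mul_assoc, hp]
  have vq : v * q = v := by rw [hv, mul_assoc, mul_assoc, hq2]
  have qw : q * w = w := by rw [hw, ← mul_assoc, hq2]
  have wq : w * q = w := by rw [hw, mul_assoc, mul_assoc, hq2]
  have qu : q * u = 0 := by rw [hu, ← mul_assoc, hqp, zero_mul]
  have uq : u * q = 0 := by rw [hu, mul_assoc, mul_assoc, hpq, mul_zero, mul_zero]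
  have qv : q * v = 0 := by rw [hv, ← mul_assoc, hqp, zero_mul]
  have vp : v * p = 0 := by rw [hv, mul_assoc, mul_assoc, hqp, mul_zero, mul_zero]
  have pw : p * w = 0 := by rw [hw, ← mul_assoc, hpq, zero_mul]
  have wp : w * p = 0 := by rw [hw, mul_assoc, mul_assoc, hqp, mul_zero, mul_zero]
  -- star letter relations
  have psu : p * star u = star u := by rw [← hps, ← star_mul, up]
  have sup : star u * p = star u := by rw [← hps, ← star_mul, pu]
  have psv : p * star v = 0 := by rw [← hps, ← star_mul, vp, star_zero]
  have svp : star v * p = star v := by rw [← hps, ← star_mul, pv]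
  have qsv : q * star v = star v := by rw [← hqs, ← star_mul, vq]
  have svq : star v * q = 0 := by rw [← hqs, ← star_mul, qv, star_zero]
  have qsu : q * star u = 0 := by rw [← hqs, ← star_mul, uq, star_zero]
  have suq : star u * q = 0 := by rw [← hqs, ← star_mul, qu, star_zero]
  have qsw : q * star w = star w := by rw [← hqs, ← star_mul, wq]
  have swq : star w * q = star w := by rw [← hqs, ← star_mul, qw]
  have psw : p * star w = 0 := by rw [← hps, ← star_mul, wp, star_zero]
  have swp : star w * p = 0 := by rw [← hps, ← star_mul, pw, star_zero]
  -- assoc forms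
  have pu' : ∀ x : R, p * (u * x) = u * x := fun x => by rw [← mul_assoc, pu]
  have pv' : ∀ x : R, p * (v * x) = v * x := fun x => by rw [← mul_assoc, pv]
  have pw' : ∀ x : R, p * (w * x) = 0 := fun x => by rw [← mul_assoc, pw, zero_mul]
  have qu' : ∀ x : R, q * (u * x) = 0 := fun x => by rw [← mul_assoc, qu, zero_mul]
  have qv' : ∀ x : R, q * (v * x) = 0 := fun x => by rw [← mul_assoc, qv, zero_mul]
  have qw' : ∀ x : R, q * (w * x) = w * x := fun x => by rw [← mul_assoc, qw]
  have psu' : ∀ x : R, p * (star u * x) = star u * x := fun x => by rw [← mul_assoc, psu]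
  have psv' : ∀ x : R, p * (star v * x) = 0 := fun x => by rw [← mul_assoc, psv, zero_mul]
  have psw' : ∀ x : R, p * (star w * x) = 0 := fun x => by rw [← mul_assoc, psw, zero_mul]
  have qsu' : ∀ x : R, q * (star u * x) = 0 := fun x => by rw [← mul_assoc, qsu, zero_mul]
  have qsv' : ∀ x : R, q * (star v * x) = star v * x := fun x => by rw [← mul_assoc, qsv]
  have qsw' : ∀ x : R, q * (star w * x) = star w * x := fun x => by rw [← mul_assoc, qsw]
  have usv : u * star v = 0 := by rw [← qsv, ← mul_assoc, uq, zero_mul]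
  have vsu : v * star u = 0 := by rw [← psu, ← mul_assoc, vp, zero_mul]
  have svw : star v * w = 0 := by rw [← qw, ← mul_assoc, svq, zero_mul]
  have swv : star w * v = 0 := by rw [← pv, ← mul_assoc, swp, zero_mul]
  constructor
  · rw [hT]
    simp only [star_add, mul_add, add_mul, sub_mul, mul_sub, mul_assoc,
      pu', pv', pw', qu', qv', qw', psu', psv', psw', qsu', qsv', qsw',
      pu, pv, pw, qu, qv, qw, up, uq, vp, vq, wp, wq,
      psu, psv, psw, qsu, qsv, qsw, sup, suq, svp, svq, swp, swq, usv, vsu, svw, swv,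
      mul_zero, zero_mul, add_zero, zero_add, sub_zero, zero_sub]
    abel
  · rw [hT]
    simp only [star_add, mul_add, add_mul, sub_mul, mul_sub, mul_assoc,
      pu', pv', pw', qu', qv', qw', psu', psv', psw', qsu', qsv', qsw',
      pu, pv, pw, qu, qv, qw, up, uq, vp, vq, wp, wq,
      psu, psv, psw, qsu, qsv, qsw, sup, suq, svp, svq, swp, swq, usv, vsu, svw, swv,
      mul_zero, zero_mul, add_zero, zero_add, sub_zero, zero_sub]
    abel


lemma compact_sandwich' {E F G D : Type*}
    [NormedAddCommGroup E] [NormedSpace ℂ E] [NormedAddCommGroup F] [NormedSpace ℂ F]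
    [NormedAddCommGroup G] [NormedSpace ℂ G] [NormedAddCommGroup D] [NormedSpace ℂ D]
    (g : G →L[ℂ] D) {h : F →L[ℂ] G} (k : E →L[ℂ] F) (hh : IsCompactOperator ⇑h) :
    IsCompactOperator ⇑(g ∘L h ∘L k) := by
  have h1 : IsCompactOperator (⇑h ∘ ⇑k) := hh.comp_clm k
  exact h1.clm_comp g

set_option maxHeartbeats 1000000 in
/-- let `M₁ = H` be an essentially reductive Hilbert module (the
module multiplications `ρ a` are all essentially normal), and consider a short
exact sequence `0 ← M₀ ← M₁ ← M₂ ← 0` where `X₁ : M₂ → M₁` is an isometric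
module map with range the submodule `N`, and `M₀ ≅ M₁/N` carries the compressed
action `(1-P) ρ a (1-P)` (where `P` is the projection onto `N`).  Then `M₂` is
essentially reductive iff `M₀` is essentially reductive. -/
theorem submodule_essentially_reductive_iff_quotient
    {ι : Type*} {H M2 : Type*}
    [NormedAddCommGroup H] [InnerProductSpace ℂ H] [CompleteSpace H]
    [NormedAddCommGroup M2] [InnerProductSpace ℂ M2] [CompleteSpace M2]
    (ρ : ι → H →L[ℂ] H) (ρ2 : ι → M2 →L[ℂ] M2)
    (hess : ∀ a, IsCompactOperator ⇑(adjoint (ρ a) ∘L ρ a - ρ a ∘L adjoint (ρ a)))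
    (N : Submodule ℂ H) [CompleteSpace N]
    (X1 : M2 →L[ℂ] H) (hiso : ∀ x, ‖X1 x‖ = ‖x‖)
    (hrange : LinearMap.range (X1 : M2 →ₗ[ℂ] H) = N)
    (hmod : ∀ a, ρ a ∘L X1 = X1 ∘L ρ2 a)
    (P : H →L[ℂ] H) (hP : P = N.subtypeL ∘L N.orthogonalProjectionOnto) :
    (∀ a, IsCompactOperator
        ⇑(adjoint (ρ2 a) ∘L ρ2 a - ρ2 a ∘L adjoint (ρ2 a))) ↔
    (∀ a, IsCompactOperator
        ⇑((adjoint ((1 - P) ∘L ρ a ∘L (1 - P)) ∘L ((1 - P) ∘L ρ a ∘L (1 - P)) -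
          ((1 - P) ∘L ρ a ∘L (1 - P)) ∘L adjoint ((1 - P) ∘L ρ a ∘L (1 - P)) :
          H →L[ℂ] H))) := by
  have hPapp : ∀ y, P y = (N.orthogonalProjectionOnto y : H) := fun y => by rw [hP]; rfl
  have hPmem : ∀ y, P y ∈ N := fun y => by rw [hPapp]; exact (N.orthogonalProjectionOnto y).2
  have hNfix : ∀ y ∈ N, P y = y := fun y hy => by
    rw [hPapp]; exact Submodule.starProjection_eq_self_iff.mpr hy
  have hPP : ∀ y, P (P y) = P y := fun y => hNfix _ (hPmem y)
  have hPstar : star P = P := by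
    rw [hP]; exact (isSelfAdjoint_starProjection N).star_eq
  have hp2 : P * P = P := by ext y; exact hPP y
  have hXX : adjoint X1 ∘L X1 = 1 := (norm_map_iff_adjoint_comp_self X1).mp hiso
  have l0 : ∀ x : M2, adjoint X1 (X1 x) = x := fun x => by
    have := congrArg (fun f : M2 →L[ℂ] M2 => f x) hXX; simpa using this
  have l2 : ∀ x : M2, P (X1 x) = X1 x := fun x =>
    hNfix _ (hrange ▸ LinearMap.mem_range_self X1.toLinearMap x)
  have l3 : ∀ y, adjoint X1 (P y) = adjoint X1 y := by
    intro y
    have horth : adjoint X1 (y - P y) = 0 := by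
      refine ext_inner_right ℂ fun w => ?_
      rw [adjoint_inner_left, inner_zero_left]
      refine Submodule.inner_left_of_mem_orthogonal
        (hrange ▸ LinearMap.mem_range_self X1.toLinearMap w) ?_
      rw [hPapp]
      exact Submodule.sub_starProjection_mem_orthogonal y
    rw [map_sub, sub_eq_zero] at horth
    exact horth.symm
  have l1 : ∀ y, X1 (adjoint X1 y) = P y := by
    intro y
    obtain ⟨z, hz⟩ : P y ∈ LinearMap.range X1.toLinearMap := hrange ▸ hPmem y
    have hz' : X1 z = P y := hz
    rw [← l3, ← hz', l0]
  refine forall_congr' fun a => ?_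
  set T := ρ a with hTdef
  have hTN : ∀ y ∈ N, T y ∈ N := by
    intro y hy
    obtain ⟨z, hz⟩ : y ∈ LinearMap.range X1.toLinearMap := hrange ▸ hy
    have hz' : X1 z = y := hz
    rw [← hz', ← comp_apply, hmod a, comp_apply]
    exact hrange ▸ LinearMap.mem_range_self X1.toLinearMap _
  have hqTp : (1 - P) * (T * P) = 0 := by
    ext y
    simp only [ContinuousLinearMap.mul_apply, sub_apply, ContinuousLinearMap.one_apply, zero_apply]
    rw [hNfix _ (hTN _ (hPmem y)), sub_self]
  obtain ⟨I1, I2⟩ := keycalc P T hp2 hPstar hqTp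
  have hKc : IsCompactOperator ⇑(star T * T - T * star T) := by
    have he : star T * T - T * star T = adjoint T ∘L T - T ∘L adjoint T := by
      rw [star_eq_adjoint]; rfl
    rw [he]; exact hess a
  have hpKp : IsCompactOperator ⇑(P * (star T * T - T * star T) * P) := by
    rw [mul_assoc]
    exact compact_sandwich' P P hKc
  have hqKq : IsCompactOperator ⇑((1 - P) * (star T * T - T * star T) * (1 - P)) := by
    rw [mul_assoc]
    exact compact_sandwich' (1 - P) (1 - P) hKc
  -- abbreviations
  have hDa_iff_vsv :
      IsCompactOperator ⇑(star (P*(T*P)) * (P*(T*P)) - (P*(T*P)) * star (P*(T*P))) ↔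
      IsCompactOperator ⇑((P*(T*(1-P))) * star (P*(T*(1-P)))) := by
    rw [I1] at hpKp
    constructor
    · intro h
      have e : ⇑((P*(T*(1-P))) * star (P*(T*(1-P))))
          = ⇑(star (P*(T*P)) * (P*(T*P)) - (P*(T*P)) * star (P*(T*P)))
            - ⇑((star (P*(T*P)) * (P*(T*P)) - (P*(T*P)) * star (P*(T*P)))
              - (P*(T*(1-P))) * star (P*(T*(1-P)))) := by
        funext x; simp only [Pi.sub_apply, ContinuousLinearMap.sub_apply]; abel
      rw [e]; exact h.sub hpKp
    · intro h
      have e : ⇑(star (P*(T*P)) * (P*(T*P)) - (P*(T*P)) * star (P*(T*P)))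
          = ⇑((star (P*(T*P)) * (P*(T*P)) - (P*(T*P)) * star (P*(T*P)))
              - (P*(T*(1-P))) * star (P*(T*(1-P))))
            + ⇑((P*(T*(1-P))) * star (P*(T*(1-P)))) := by
        funext x; simp only [Pi.add_apply, ContinuousLinearMap.sub_apply, ContinuousLinearMap.add_apply]; abel
      rw [e]; exact hpKp.add h
  have hvsv_iff_svv :
      IsCompactOperator ⇑((P*(T*(1-P))) * star (P*(T*(1-P)))) ↔
      IsCompactOperator ⇑(star (P*(T*(1-P))) * (P*(T*(1-P)))) := by
    constructor
    · intro h
      have hv' : IsCompactOperator ⇑(star (P*(T*(1-P)))) := by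
        apply compact_of_adjoint_comp' (star (P*(T*(1-P))))
        have e : adjoint (star (P*(T*(1-P)))) ∘L star (P*(T*(1-P)))
            = (P*(T*(1-P))) * star (P*(T*(1-P))) := by
          rw [← star_eq_adjoint, star_star]; rfl
        rw [e]; exact h
      exact hv'.comp_clm (P*(T*(1-P)))
    · intro h
      have hv' : IsCompactOperator ⇑(P*(T*(1-P))) := by
        apply compact_of_adjoint_comp' (P*(T*(1-P)))
        have e : adjoint (P*(T*(1-P))) ∘L (P*(T*(1-P)))
            = star (P*(T*(1-P))) * (P*(T*(1-P))) := by
          rw [← star_eq_adjoint]; rfl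
        rw [e]; exact h
      exact hv'.comp_clm (star (P*(T*(1-P))))
  have hsvv_iff_Dc :
      IsCompactOperator ⇑(star (P*(T*(1-P))) * (P*(T*(1-P)))) ↔
      IsCompactOperator ⇑(star ((1-P)*(T*(1-P))) * ((1-P)*(T*(1-P)))
        - ((1-P)*(T*(1-P))) * star ((1-P)*(T*(1-P)))) := by
    rw [I2] at hqKq
    constructor
    · intro h
      have e : ⇑(star ((1-P)*(T*(1-P))) * ((1-P)*(T*(1-P)))
            - ((1-P)*(T*(1-P))) * star ((1-P)*(T*(1-P))))
          = ⇑(star (P*(T*(1-P))) * (P*(T*(1-P)))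
              + (star ((1-P)*(T*(1-P))) * ((1-P)*(T*(1-P)))
                - ((1-P)*(T*(1-P))) * star ((1-P)*(T*(1-P)))))
            - ⇑(star (P*(T*(1-P))) * (P*(T*(1-P)))) := by
        funext x; simp only [Pi.sub_apply, ContinuousLinearMap.sub_apply, ContinuousLinearMap.add_apply]; abel
      rw [e]; exact hqKq.sub h
    · intro h
      have e : ⇑(star (P*(T*(1-P))) * (P*(T*(1-P))))
          = ⇑(star (P*(T*(1-P))) * (P*(T*(1-P)))
              + (star ((1-P)*(T*(1-P))) * ((1-P)*(T*(1-P)))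
                - ((1-P)*(T*(1-P))) * star ((1-P)*(T*(1-P)))))
            - ⇑(star ((1-P)*(T*(1-P))) * ((1-P)*(T*(1-P)))
                - ((1-P)*(T*(1-P))) * star ((1-P)*(T*(1-P)))) := by
        funext x; simp only [Pi.sub_apply, ContinuousLinearMap.sub_apply, ContinuousLinearMap.add_apply]; abel
      rw [e]; exact hqKq.sub h
  -- relate ρ2 commutator to compressed commutator on N
  have hS2 : ρ2 a = adjoint X1 ∘L (T ∘L X1) := by
    rw [show T ∘L X1 = X1 ∘L ρ2 a from hmod a, ← comp_assoc, hXX, one_def, id_comp]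
  have hkey : adjoint (ρ2 a) ∘L ρ2 a - ρ2 a ∘L adjoint (ρ2 a)
      = adjoint X1 ∘L ((star (P*(T*P)) * (P*(T*P)) - (P*(T*P)) * star (P*(T*P))) ∘L X1) := by
    rw [hS2]
    ext x
    simp only [adjoint_comp, adjoint_adjoint, star_mul, hPstar, comp_apply, sub_apply,
      ContinuousLinearMap.mul_apply, map_sub, l1, l2, l3, hPP, star_eq_adjoint]
  have hkey2 : (star (P*(T*P)) * (P*(T*P)) - (P*(T*P)) * star (P*(T*P)))
      = X1 ∘L ((adjoint (ρ2 a) ∘L ρ2 a - ρ2 a ∘L adjoint (ρ2 a)) ∘L adjoint X1) := by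
    rw [hkey]
    ext y
    simp only [star_mul, hPstar, comp_apply, sub_apply,
      ContinuousLinearMap.mul_apply, map_sub, l1, l2, l3, hPP, star_eq_adjoint]
  have iff1 : IsCompactOperator ⇑(adjoint (ρ2 a) ∘L ρ2 a - ρ2 a ∘L adjoint (ρ2 a)) ↔
      IsCompactOperator ⇑(star (P*(T*P)) * (P*(T*P)) - (P*(T*P)) * star (P*(T*P))) := by
    constructor
    · intro h
      rw [hkey2]; exact compact_sandwich' X1 (adjoint X1) h
    · intro h
      rw [hkey]; exact compact_sandwich' (adjoint X1) X1 h
  have hW : adjoint ((1 - P) ∘L T ∘L (1 - P)) ∘L ((1 - P) ∘L T ∘L (1 - P)) -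
      ((1 - P) ∘L T ∘L (1 - P)) ∘L adjoint ((1 - P) ∘L T ∘L (1 - P))
      = star ((1-P)*(T*(1-P))) * ((1-P)*(T*(1-P)))
        - ((1-P)*(T*(1-P))) * star ((1-P)*(T*(1-P))) := by
    rw [star_eq_adjoint]; rfl
  rw [hW]
  exact iff1.trans (hDa_iff_vsv.trans (hvsv_iff_svv.trans hsvv_iff_Dc))
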